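/- Let k > m ≥ 1 with k even and gcd(2(2m+1), 2k+1) = 1. Then there is no integer s ∈ {1,…,m} and integer n ∈ {1,…,k/2} with s·(2k+1) = 2n(2m+1) + (k-m). (I.e., the set I_{11} is empty.) -/
import Mathlib


theorem stmt_10 (k m : ℤ) (hm : 1 ≤ m) (hk : m < k) (hke : Even k)
    (hgcd : Int.gcd (2*(2*m+1)) (2*k+1) = 1) :
    ¬ ∃ s n : ℤ, 1 ≤ s ∧ s ≤ m ∧ 1 ≤ n ∧ n ≤ k/2 ∧
      s*(2*k+1) = 2*n*(2*m+1) + (k-m) := by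
  rintro ⟨s, n, hs1, hsm, hn1, hnk, heq⟩
  have hcop2 : IsCoprime (2*(2*m+1)) (2*k+1) := Int.isCoprime_iff_gcd_eq_one.mpr hgcd
  have hcop : IsCoprime (2*m+1) (2*k+1) := (IsCoprime.of_mul_left_right hcop2)
  have hdvd : (2*m+1) ∣ (2*s-1)*(2*k+1) := ⟨4*n-1, by linarith [heq]⟩
  have hdvd2 : (2*m+1) ∣ (2*s-1) := (hcop.dvd_of_dvd_mul_right hdvd)
  have := Int.le_of_dvd (by linarith) hdvd2
  linarith
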